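/- Suppose the Verblunsky coefficients satisfy |α_n| ≤ C q^n for all n ≥ 0, where C > 0 and q ∈ (0,1). Then for every q' ∈ (q,1) there is a constant C̃_{q'} > 0 such that for all n ≥ 0 and all z with |z| ≤ q', |Φ_n*(z) − S(z)| ≤ C̃_{q'} (q q')^n. -/

import Mathlib

open Polynomial Filter Topology

/-- The monic orthogonal polynomials on the unit circle, defined by the Szegő
recursion `Φ₀ = 1`, `Φ_{n+1}(z) = z Φ_n(z) - conj(α_n) Φ_n^*(z)`, where the reversed
polynomial is `P^*(z) = Σ_{j=0}^n conj(c_{n-j}) z^j`. -/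
noncomputable def PhiP (α : ℕ → ℂ) : ℕ → Polynomial ℂ
  | 0 => 1
  | n + 1 => X * PhiP α n -
      Polynomial.C ((starRingEnd ℂ) (α n)) *
        Polynomial.reflect n (Polynomial.map (starRingEnd ℂ) (PhiP α n))

/-- The reversed polynomial `Φ_n^*(z) = z^n conj(Φ_n(1/conj z))`. -/
noncomputable def PhiStarP (α : ℕ → ℂ) (n : ℕ) : Polynomial ℂ :=
  Polynomial.reflect n (Polynomial.map (starRingEnd ℂ) (PhiP α n))

lemma natDegree_reflect_le {f : Polynomial ℂ} {n : ℕ} (h : f.natDegree ≤ n) :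
    (Polynomial.reflect n f).natDegree ≤ n := by
  refine natDegree_le_iff_coeff_eq_zero.mpr fun m hm => ?_
  rw [coeff_reflect, revAt_eq_self_of_lt hm]
  exact coeff_eq_zero_of_natDegree_lt (lt_of_le_of_lt h hm)

lemma phiP_natDegree_le (α : ℕ → ℂ) : ∀ n, (PhiP α n).natDegree ≤ n := by
  intro n
  induction n with
  | zero => simp [PhiP]
  | succ n ih =>
    rw [PhiP]
    refine le_trans (natDegree_sub_le _ _) (max_le ?_ ?_)
    · refine le_trans (natDegree_mul_le) ?_
      simp only [natDegree_X]
      omega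
    · refine le_trans (natDegree_mul_le) ?_
      simp only [natDegree_C, zero_add]
      refine le_trans (natDegree_reflect_le (by simpa [natDegree_map] using ih)) (Nat.le_succ n)

lemma reflect_succ_reflect {P : Polynomial ℂ} {n : ℕ} (h : P.natDegree ≤ n) :
    Polynomial.reflect (n + 1) (Polynomial.reflect n P) = X * P := by
  ext i
  rw [coeff_reflect, coeff_reflect]
  match i with
  | 0 =>
    rw [revAt_le (Nat.zero_le _), Nat.sub_zero, revAt_eq_self_of_lt (Nat.lt_succ_self n)]
    simp [coeff_eq_zero_of_natDegree_lt (lt_of_le_of_lt h (Nat.lt_succ_self n))]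
  | (k+1) =>
    rw [coeff_X_mul]
    by_cases hk : k + 1 ≤ n + 1
    · have h1 : revAt (n+1) (k+1) = n - k := by rw [revAt_le hk]; omega
      rw [h1, revAt_le (Nat.sub_le n k)]
      congr 1; omega
    · have h1 : revAt (n+1) (k+1) = k+1 := revAt_eq_self_of_lt (by omega)
      have h2 : revAt n (k+1) = k+1 := revAt_eq_self_of_lt (by omega)
      rw [h1, h2, coeff_eq_zero_of_natDegree_lt (by omega),
        coeff_eq_zero_of_natDegree_lt (by omega)]

lemma phiStarP_succ (α : ℕ → ℂ) (n : ℕ) :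
    PhiStarP α (n + 1) = PhiStarP α n - Polynomial.C (α n) * (X * PhiP α n) := by
  have hdeg : (PhiP α n).natDegree ≤ n := phiP_natDegree_le α n
  have hdegmap : ((PhiP α n).map (starRingEnd ℂ)).natDegree ≤ n := by
    simpa [natDegree_map] using hdeg
  rw [PhiStarP, PhiP, Polynomial.map_sub, Polynomial.map_mul, Polynomial.map_mul,
    Polynomial.map_X, map_C, reflect_sub, reflect_C_mul]
  congr 1
  · have : (n + 1) = 1 + n := by omega
    rw [this, reflect_mul X _ (by simp) hdegmap]
    simp [PhiStarP, reflect_monomial 1 1, revAt_le (le_refl 1)]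
  · have hc : (starRingEnd ℂ) ((starRingEnd ℂ) (α n)) = α n := by simp
    rw [hc]
    congr 1
    rw [← reflect_map, Polynomial.map_map]
    have hcc : (starRingEnd ℂ).comp (starRingEnd ℂ) = RingHom.id ℂ := by
      ext z; simp
    rw [hcc, Polynomial.map_id, reflect_succ_reflect hdeg]

theorem stmt_4 (α : ℕ → ℂ) (hα : ∀ n, ‖α n‖ < 1)
    (C q : ℝ) (hC : 0 < C) (hq0 : 0 < q) (hq1 : q < 1)
    (hdecay : ∀ n : ℕ, ‖α n‖ ≤ C * q ^ n)
    (S : ℂ → ℂ)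
    (hS : ∀ z : ℂ, ‖z‖ < 1 / q →
      Tendsto (fun n : ℕ => (PhiStarP α n).eval z) atTop (nhds (S z))) :
    ∀ q' : ℝ, q < q' → q' < 1 →
      ∃ Ct : ℝ, 0 < Ct ∧ ∀ n : ℕ, ∀ z : ℂ, ‖z‖ ≤ q' →
        ‖(PhiStarP α n).eval z - S z‖ ≤ Ct * (q * q') ^ n := by
  intro q' hqq' hq'1
  have hq'0 : 0 < q' := lt_trans hq0 hqq'
  have h1q : (0:ℝ) < 1 - q := by linarith
  -- eval recursions
  have hψrec : ∀ n z, (PhiStarP α (n+1)).eval z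
      = (PhiStarP α n).eval z - α n * (z * (PhiP α n).eval z) := by
    intro n z; rw [phiStarP_succ]; simp
  have hφrec : ∀ n z, (PhiP α (n+1)).eval z
      = z * (PhiP α n).eval z - (starRingEnd ℂ) (α n) * (PhiStarP α n).eval z := by
    intro n z
    show ((X * PhiP α n - Polynomial.C ((starRingEnd ℂ) (α n)) * PhiStarP α n).eval z) = _
    simp
  -- uniform bound M
  set M : ℝ := Real.exp (C / (1 - q)) with hMdef
  have hM1 : 1 ≤ M := Real.one_le_exp (by positivity)
  have hgeom : ∀ n : ℕ, (∑ k ∈ Finset.range n, q ^ k) ≤ (1 - q)⁻¹ := by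
    intro n
    refine le_trans (Summable.sum_le_tsum (Finset.range n) (fun i _ => by positivity)
      (summable_geometric_of_lt_one hq0.le hq1)) ?_
    rw [tsum_geometric_of_lt_one hq0.le hq1]
  have hbound : ∀ n : ℕ, ∀ z : ℂ, ‖z‖ ≤ 1 →
      ‖(PhiP α n).eval z‖ ≤ Real.exp (C * ∑ k ∈ Finset.range n, q ^ k) ∧
      ‖(PhiStarP α n).eval z‖ ≤ Real.exp (C * ∑ k ∈ Finset.range n, q ^ k) := by
    intro n
    induction n with
    | zero => intro z hz; simp [PhiP, PhiStarP]
    | succ n ih =>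
      intro z hz
      obtain ⟨h1, h2⟩ := ih z hz
      set E := Real.exp (C * ∑ k ∈ Finset.range n, q ^ k) with hE
      have hE0 : 0 < E := Real.exp_pos _
      have hEs : Real.exp (C * ∑ k ∈ Finset.range (n+1), q ^ k)
          = E * Real.exp (C * q ^ n) := by
        rw [hE, ← Real.exp_add, Finset.sum_range_succ, mul_add]
      have hexp : 1 + C * q ^ n ≤ Real.exp (C * q ^ n) := by
        have := Real.add_one_le_exp (C * q ^ n); linarith
      have hαn := hdecay n
      have hqn : (0:ℝ) < q ^ n := by positivity
      have key : (1 + C * q ^ n) * E ≤ Real.exp (C * ∑ k ∈ Finset.range (n+1), q ^ k) := by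
        rw [hEs]; nlinarith [hE0, hexp]
      have habs : ‖(starRingEnd ℂ) (α n)‖ = ‖α n‖ :=
        Complex.norm_conj _
      constructor
      · rw [hφrec]
        refine le_trans (norm_sub_le _ _) ?_
        rw [norm_mul, norm_mul, habs]
        have t1 : ‖z‖ * ‖(PhiP α n).eval z‖ ≤ 1 * E :=
          mul_le_mul hz h1 (norm_nonneg _) zero_le_one
        have t2 : ‖α n‖ * ‖(PhiStarP α n).eval z‖ ≤ (C * q ^ n) * E :=
          mul_le_mul hαn h2 (norm_nonneg _) (by positivity)
        nlinarith [t1, t2, key]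
      · rw [hψrec]
        refine le_trans (norm_sub_le _ _) ?_
        rw [norm_mul, norm_mul]
        have t1 : ‖z‖ * ‖(PhiP α n).eval z‖ ≤ 1 * E :=
          mul_le_mul hz h1 (norm_nonneg _) zero_le_one
        have t2 : ‖α n‖ * (‖z‖ * ‖(PhiP α n).eval z‖)
            ≤ (C * q ^ n) * (1 * E) :=
          mul_le_mul hαn t1 (by positivity) (by positivity)
        nlinarith [t2, key, h2]
  have hMbound : ∀ n : ℕ, ∀ z : ℂ, ‖z‖ ≤ q' →
      ‖(PhiStarP α n).eval z‖ ≤ M := by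
    intro n z hz
    refine le_trans ((hbound n z (hz.trans hq'1.le)).2) ?_
    refine Real.exp_le_exp.mpr ?_
    rw [div_eq_mul_inv]
    exact mul_le_mul_of_nonneg_left (hgeom n) hC.le
  -- geometric decay of Φ_n
  set D : ℝ := C * M / (q' - q) with hDdef
  have hq'q : (0:ℝ) < q' - q := by linarith
  have hD0 : 0 < D := div_pos (mul_pos hC (lt_of_lt_of_le one_pos hM1)) hq'q
  set K : ℝ := 1 + D with hKdef
  have hK1 : 1 ≤ K := by rw [hKdef]; linarith
  have hDq : D * (q' - q) = C * M := div_mul_cancel₀ _ (ne_of_gt hq'q)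
  have hφdecay : ∀ n : ℕ, ∀ z : ℂ, ‖z‖ ≤ q' →
      ‖(PhiP α n).eval z‖ ≤ K * q' ^ n - D * q ^ n := by
    intro n
    induction n with
    | zero => intro z hz; simp [PhiP, hKdef]
    | succ n ih =>
      intro z hz
      have h1 := ih z hz
      have h2 := hMbound n z hz
      have hαn := hdecay n
      have hqn : (0:ℝ) < q ^ n := by positivity
      have hq'n : (0:ℝ) < q' ^ n := by positivity
      have habs : ‖(starRingEnd ℂ) (α n)‖ = ‖α n‖ :=
        Complex.norm_conj _
      rw [hφrec]
      refine le_trans (norm_sub_le _ _) ?_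
      rw [norm_mul, norm_mul, habs]
      have hφnn : (0:ℝ) ≤ ‖(PhiP α n).eval z‖ := norm_nonneg _
      have t1 : ‖z‖ * ‖(PhiP α n).eval z‖
          ≤ q' * (K * q' ^ n - D * q ^ n) :=
        mul_le_mul hz h1 hφnn hq'0.le
      have t2 : ‖α n‖ * ‖(PhiStarP α n).eval z‖
          ≤ (C * q ^ n) * M :=
        mul_le_mul hαn h2 (norm_nonneg _) (by positivity)
      have hprod : D * (q' - q) * q ^ n = C * M * q ^ n := by rw [hDq]
      rw [pow_succ q' n, pow_succ q n]
      nlinarith [t1, t2, hprod, hqn.le]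
  -- difference bound
  set r : ℝ := q * q' with hrdef
  have hr0 : 0 < r := mul_pos hq0 hq'0
  have hr1 : r < 1 := by nlinarith
  have h1r : (0:ℝ) < 1 - r := by linarith
  set c : ℝ := C * K * q' with hcdef
  have hK0 : (0:ℝ) < K := lt_of_lt_of_le one_pos hK1
  have hc0 : 0 < c := by rw [hcdef]; positivity
  have hdiff : ∀ n : ℕ, ∀ z : ℂ, ‖z‖ ≤ q' →
      ‖(PhiStarP α (n+1)).eval z - (PhiStarP α n).eval z‖ ≤ c * r ^ n := by
    intro n z hz
    rw [hψrec]
    have heq : (PhiStarP α n).eval z - α n * (z * (PhiP α n).eval z) - (PhiStarP α n).eval z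
        = -(α n * (z * (PhiP α n).eval z)) := by ring
    rw [heq, norm_neg, norm_mul, norm_mul]
    have h1 := hdecay n
    have h2 := hφdecay n z hz
    have h3 : ‖(PhiP α n).eval z‖ ≤ K * q' ^ n := by
      have : (0:ℝ) ≤ D * q ^ n := by positivity
      linarith
    have t1 : ‖z‖ * ‖(PhiP α n).eval z‖ ≤ q' * (K * q' ^ n) :=
      mul_le_mul hz h3 (norm_nonneg _) hq'0.le
    have t2 : ‖α n‖ * (‖z‖ * ‖(PhiP α n).eval z‖)
        ≤ (C * q ^ n) * (q' * (K * q' ^ n)) :=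
      mul_le_mul h1 t1 (by positivity) (by positivity)
    refine le_trans t2 (le_of_eq ?_)
    rw [hcdef, hrdef, mul_pow]; ring
  -- tail bound
  have htail : ∀ n m : ℕ, n ≤ m → ∀ z : ℂ, ‖z‖ ≤ q' →
      ‖(PhiStarP α n).eval z - (PhiStarP α m).eval z‖
        ≤ c * (1 - r)⁻¹ * r ^ n := by
    intro n m hnm z hz
    have hd : dist ((PhiStarP α n).eval z) ((PhiStarP α m).eval z)
        ≤ ∑ k ∈ Finset.Ico n m, c * r ^ k := by
      refine dist_le_Ico_sum_of_dist_le (f := fun k => (PhiStarP α k).eval z) hnm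
        (fun {k} _ _ => ?_)
      rw [Complex.dist_eq]
      have := hdiff k z hz
      calc ‖(PhiStarP α k).eval z - (PhiStarP α (k+1)).eval z‖
          = ‖(PhiStarP α (k+1)).eval z - (PhiStarP α k).eval z‖ :=
            (norm_sub_rev _ _)
        _ ≤ c * r ^ k := this
    rw [← Complex.dist_eq]
    refine le_trans hd ?_
    rw [← Finset.mul_sum]
    have hsum : ∑ k ∈ Finset.Ico n m, r ^ k ≤ r ^ n * (1 - r)⁻¹ := by
      rw [Finset.sum_Ico_eq_sum_range]
      have hcongr : ∀ i ∈ Finset.range (m - n), r ^ (n + i) = r ^ n * r ^ i :=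
        fun i _ => pow_add r n i
      rw [Finset.sum_congr rfl hcongr, ← Finset.mul_sum]
      refine mul_le_mul_of_nonneg_left ?_ (by positivity)
      refine le_trans (Summable.sum_le_tsum (Finset.range (m-n)) (fun i _ => by positivity)
        (summable_geometric_of_lt_one hr0.le hr1)) ?_
      rw [tsum_geometric_of_lt_one hr0.le hr1]
    calc c * ∑ k ∈ Finset.Ico n m, r ^ k ≤ c * (r ^ n * (1 - r)⁻¹) :=
        mul_le_mul_of_nonneg_left hsum hc0.le
      _ = c * (1 - r)⁻¹ * r ^ n := by ring
  refine ⟨c * (1 - r)⁻¹, by positivity, ?_⟩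
  intro n z hz
  have hz' : ‖z‖ < 1 / q := by
    have hlt : q' < 1 / q := by
      rw [lt_div_iff₀ hq0]; nlinarith
    linarith
  have hlim : Tendsto (fun m : ℕ => ‖(PhiStarP α n).eval z - (PhiStarP α m).eval z‖)
      atTop (nhds (‖(PhiStarP α n).eval z - S z‖)) := by
    have h1 : Tendsto (fun m : ℕ => (PhiStarP α n).eval z - (PhiStarP α m).eval z)
        atTop (nhds ((PhiStarP α n).eval z - S z)) :=
      tendsto_const_nhds.sub (hS z hz')
    exact (continuous_norm.tendsto _).comp h1
  refine le_of_tendsto hlim ?_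
  filter_upwards [eventually_ge_atTop n] with m hm
  exact htail n m hm z hz
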